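/- arXiv:2602.22598 — 2 statements merged into one kernel-verified Lean document; each statement's English description precedes it below -/
import Mathlib

section
/- Let D ⊆ {(x,r) ∈ ℝ² : r > 0} be open and let ρ, u, v ∈ C²(D) with ρ > 0 on D satisfy pointwise the steady axisymmetric isentropic Euler system: ∂_x(rρu) + ∂_r(rρv) = 0, ∂_x(rρu²) + ∂_r(rρuv) + r∂_x(P(ρ)) = 0, ∂_x(rρuv) + ∂_r(rρv²) + r∂_r(P(ρ)) = 0. Then the quantity ω/(ρr), where ω = ∂_xv − ∂_ru is the vorticity, is transported by the flow: u∂_x(ω/(ρr)) + v∂_r(ω/(ρr)) = 0 at every point of D. -/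
open scoped Topology
open Filter Set MeasureTheory

noncomputable section

/-- Partial derivative in the axial (`x`) direction for functions on `ℝ × ℝ`. -/
def pdX (F : ℝ × ℝ → ℝ) (p : ℝ × ℝ) : ℝ := fderiv ℝ F p (1, 0)

/-- Partial derivative in the radial (`r`) direction for functions on `ℝ × ℝ`. -/
def pdR (F : ℝ × ℝ → ℝ) (p : ℝ × ℝ) : ℝ := fderiv ℝ F p (0, 1)

/-- Pressure `P(ρ) = ρ^γ/γ`. -/
def Pres (γ ρ : ℝ) : ℝ := ρ ^ γ / γ

/-- Enthalpy `h(ρ) = ρ^(γ-1)/(γ-1)`. -/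
def enth (γ ρ : ℝ) : ℝ := ρ ^ (γ - 1) / (γ - 1)

/-- Sound speed `c(ρ) = ρ^((γ-1)/2)`. -/
def sound (γ ρ : ℝ) : ℝ := ρ ^ ((γ - 1) / 2)

/-- Meridian domain `Ω = {(x,r) : r > f(x)}`. -/
def mdom (f : ℝ → ℝ) : Set (ℝ × ℝ) := {p | f p.1 < p.2}

/-- `α`-Hölder continuity (with some constant) on a set, for functions on `ℝ²`. -/
def HolderOn (α : ℝ) (g : ℝ × ℝ → ℝ) (s : Set (ℝ × ℝ)) : Prop :=
  ∃ C : ℝ, ∀ p ∈ s, ∀ q ∈ s, |g p - g q| ≤ C * dist p q ^ α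

/-- `α`-Hölder continuity (with some constant) on a set, for functions on `ℝ`. -/
def HolderOn1 (α : ℝ) (g : ℝ → ℝ) (s : Set ℝ) : Prop :=
  ∃ C : ℝ, ∀ p ∈ s, ∀ q ∈ s, |g p - g q| ≤ C * |p - q| ^ α

/-- `g ∈ C^{1,α}(Ω) ∩ C^{α}(Ω̄)`: differentiable in `Ω` with locally `α`-Hölder
partial derivatives, and `α`-Hölder continuous up to the boundary. -/
def C1HolderOn (α : ℝ) (g : ℝ × ℝ → ℝ) (Ω : Set (ℝ × ℝ)) : Prop :=
  DifferentiableOn ℝ g Ω ∧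
  (∀ K : Set (ℝ × ℝ), IsCompact K → K ⊆ Ω → HolderOn α (pdX g) K ∧ HolderOn α (pdR g) K) ∧
  HolderOn α g (closure Ω)

/-- The steady axisymmetric isentropic Euler system, pointwise at `p = (x,r)`. -/
def EulerAt (γ : ℝ) (ρ u v : ℝ × ℝ → ℝ) (p : ℝ × ℝ) : Prop :=
  pdX (fun q => q.2 * ρ q * u q) p + pdR (fun q => q.2 * ρ q * v q) p = 0 ∧
  pdX (fun q => q.2 * ρ q * u q ^ 2) p + pdR (fun q => q.2 * ρ q * u q * v q) p
      + p.2 * pdX (fun q => Pres γ (ρ q)) p = 0 ∧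
  pdX (fun q => q.2 * ρ q * u q * v q) p + pdR (fun q => q.2 * ρ q * v q ^ 2) p
      + p.2 * pdR (fun q => Pres γ (ρ q)) p = 0


section VorticityHelpers

lemma pdX_mul {f g : ℝ × ℝ → ℝ} {q : ℝ × ℝ} (hf : DifferentiableAt ℝ f q)
    (hg : DifferentiableAt ℝ g q) :
    pdX (fun x => f x * g x) q = pdX f q * g q + f q * pdX g q := by
  simp only [pdX, fderiv_fun_mul hf hg, ContinuousLinearMap.add_apply,
    ContinuousLinearMap.smul_apply, smul_eq_mul]
  ring

lemma pdR_mul {f g : ℝ × ℝ → ℝ} {q : ℝ × ℝ} (hf : DifferentiableAt ℝ f q)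
    (hg : DifferentiableAt ℝ g q) :
    pdR (fun x => f x * g x) q = pdR f q * g q + f q * pdR g q := by
  simp only [pdR, fderiv_fun_mul hf hg, ContinuousLinearMap.add_apply,
    ContinuousLinearMap.smul_apply, smul_eq_mul]
  ring

lemma pdX_add {f g : ℝ × ℝ → ℝ} {q : ℝ × ℝ} (hf : DifferentiableAt ℝ f q)
    (hg : DifferentiableAt ℝ g q) :
    pdX (fun x => f x + g x) q = pdX f q + pdX g q := by
  simp only [pdX, fderiv_fun_add hf hg, ContinuousLinearMap.add_apply]

lemma pdR_add {f g : ℝ × ℝ → ℝ} {q : ℝ × ℝ} (hf : DifferentiableAt ℝ f q)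
    (hg : DifferentiableAt ℝ g q) :
    pdR (fun x => f x + g x) q = pdR f q + pdR g q := by
  simp only [pdR, fderiv_fun_add hf hg, ContinuousLinearMap.add_apply]

lemma pdX_sub {f g : ℝ × ℝ → ℝ} {q : ℝ × ℝ} (hf : DifferentiableAt ℝ f q)
    (hg : DifferentiableAt ℝ g q) :
    pdX (fun x => f x - g x) q = pdX f q - pdX g q := by
  simp only [pdX, fderiv_fun_sub hf hg, ContinuousLinearMap.sub_apply]

lemma pdR_sub {f g : ℝ × ℝ → ℝ} {q : ℝ × ℝ} (hf : DifferentiableAt ℝ f q)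
    (hg : DifferentiableAt ℝ g q) :
    pdR (fun x => f x - g x) q = pdR f q - pdR g q := by
  simp only [pdR, fderiv_fun_sub hf hg, ContinuousLinearMap.sub_apply]

lemma pdX_snd {q : ℝ × ℝ} : pdX (fun x : ℝ × ℝ => x.2) q = 0 := by
  have h : HasFDerivAt (fun x : ℝ × ℝ => x.2) (ContinuousLinearMap.snd ℝ ℝ ℝ) q :=
    hasFDerivAt_snd
  simp only [pdX, h.fderiv]; rfl

lemma pdR_snd {q : ℝ × ℝ} : pdR (fun x : ℝ × ℝ => x.2) q = 1 := by
  have h : HasFDerivAt (fun x : ℝ × ℝ => x.2) (ContinuousLinearMap.snd ℝ ℝ ℝ) q :=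
    hasFDerivAt_snd
  simp only [pdR, h.fderiv]; rfl

lemma pdX_comp {ρ : ℝ × ℝ → ℝ} {q : ℝ × ℝ} {φ : ℝ → ℝ} {d : ℝ}
    (hφ : HasDerivAt φ d (ρ q)) (hρ : DifferentiableAt ℝ ρ q) :
    pdX (fun x => φ (ρ x)) q = d * pdX ρ q := by
  have h : HasFDerivAt (fun x => φ (ρ x)) (d • fderiv ℝ ρ q) q :=
    hφ.comp_hasFDerivAt q hρ.hasFDerivAt
  simp only [pdX, h.fderiv]
  rfl

lemma pdR_comp {ρ : ℝ × ℝ → ℝ} {q : ℝ × ℝ} {φ : ℝ → ℝ} {d : ℝ}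
    (hφ : HasDerivAt φ d (ρ q)) (hρ : DifferentiableAt ℝ ρ q) :
    pdR (fun x => φ (ρ x)) q = d * pdR ρ q := by
  have h : HasFDerivAt (fun x => φ (ρ x)) (d • fderiv ℝ ρ q) q :=
    hφ.comp_hasFDerivAt q hρ.hasFDerivAt
  simp only [pdR, h.fderiv]
  rfl

lemma diff_pdX {g : ℝ × ℝ → ℝ} {q : ℝ × ℝ} (hg : ContDiffAt ℝ 2 g q) :
    DifferentiableAt ℝ (pdX g) q := by
  have h : DifferentiableAt ℝ (fderiv ℝ g) q :=
    (hg.fderiv_right (m := 1) (by norm_num)).differentiableAt one_ne_zero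
  exact h.clm_apply (differentiableAt_const _)

lemma diff_pdR {g : ℝ × ℝ → ℝ} {q : ℝ × ℝ} (hg : ContDiffAt ℝ 2 g q) :
    DifferentiableAt ℝ (pdR g) q := by
  have h : DifferentiableAt ℝ (fderiv ℝ g) q :=
    (hg.fderiv_right (m := 1) (by norm_num)).differentiableAt one_ne_zero
  exact h.clm_apply (differentiableAt_const _)

lemma pd_symm {g : ℝ × ℝ → ℝ} {q : ℝ × ℝ} (hg : ContDiffAt ℝ 2 g q) :
    pdR (pdX g) q = pdX (pdR g) q := by
  have hs : IsSymmSndFDerivAt ℝ g q := hg.isSymmSndFDerivAt (by simp)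
  have h : DifferentiableAt ℝ (fderiv ℝ g) q :=
    (hg.fderiv_right (m := 1) (by norm_num)).differentiableAt one_ne_zero
  have e1 : pdR (pdX g) q = fderiv ℝ (fderiv ℝ g) q (0, 1) (1, 0) := by
    simp only [pdX, pdR]
    rw [show pdX g = fun x => fderiv ℝ g x (1, 0) from rfl]
    rw [fderiv_clm_apply h (differentiableAt_const _)]
    simp
  have e2 : pdX (pdR g) q = fderiv ℝ (fderiv ℝ g) q (1, 0) (0, 1) := by
    simp only [pdX, pdR]
    rw [show pdR g = fun x => fderiv ℝ g x (0, 1) from rfl]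
    rw [fderiv_clm_apply h (differentiableAt_const _)]
    simp
  rw [e1, e2, hs.eq]

lemma pd_flux {ρ w : ℝ × ℝ → ℝ} {q : ℝ × ℝ} (hρ : DifferentiableAt ℝ ρ q)
    (hw : DifferentiableAt ℝ w q) :
    pdX (fun x => x.2 * ρ x * w x) q = q.2 * pdX ρ q * w q + q.2 * ρ q * pdX w q ∧
    pdR (fun x => x.2 * ρ x * w x) q
      = (ρ q + q.2 * pdR ρ q) * w q + q.2 * ρ q * pdR w q := by
  have hs : DifferentiableAt ℝ (fun x : ℝ × ℝ => x.2) q := differentiableAt_snd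
  have h2 : DifferentiableAt ℝ (fun x : ℝ × ℝ => x.2 * ρ x) q := hs.mul hρ
  constructor
  · rw [pdX_mul h2 hw, pdX_mul hs hρ, pdX_snd]; ring
  · rw [pdR_mul h2 hw, pdR_mul hs hρ, pdR_snd]; ring

lemma pdX_sq {u : ℝ × ℝ → ℝ} {q : ℝ × ℝ} (hu : DifferentiableAt ℝ u q) :
    pdX (fun x => u x ^ 2) q = 2 * u q * pdX u q := by
  rw [show (fun x => u x ^ 2) = (fun x => u x * u x) from funext fun x => pow_two (u x),
    pdX_mul hu hu]
  ring

lemma pdR_sq {u : ℝ × ℝ → ℝ} {q : ℝ × ℝ} (hu : DifferentiableAt ℝ u q) :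
    pdR (fun x => u x ^ 2) q = 2 * u q * pdR u q := by
  rw [show (fun x => u x ^ 2) = (fun x => u x * u x) from funext fun x => pow_two (u x),
    pdR_mul hu hu]
  ring

end VorticityHelpers

/-- **Vorticity transport.** If `(ρ,u,v)` is a `C²` positive-density solution of the steady
axisymmetric isentropic Euler system on an open set `D ⊆ {r > 0}`, then the quantity
`ω/(ρr)` with `ω = ∂ₓv − ∂ᵣu` satisfies `u ∂ₓ(ω/(ρr)) + v ∂ᵣ(ω/(ρr)) = 0` on `D`. -/
theorem vorticity_transport
    (γ : ℝ) (hγ : 1 < γ)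
    (D : Set (ℝ × ℝ)) (hD : IsOpen D) (hDpos : ∀ p ∈ D, 0 < p.2)
    (ρ u v : ℝ × ℝ → ℝ)
    (hρ : ContDiffOn ℝ 2 ρ D) (hu : ContDiffOn ℝ 2 u D) (hv : ContDiffOn ℝ 2 v D)
    (hρpos : ∀ p ∈ D, 0 < ρ p)
    (heuler : ∀ p ∈ D, EulerAt γ ρ u v p) :
    ∀ p ∈ D,
      u p * pdX (fun q => (pdX v q - pdR u q) / (ρ q * q.2)) p
        + v p * pdR (fun q => (pdX v q - pdR u q) / (ρ q * q.2)) p = 0 := by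
  have hρc : ∀ q ∈ D, ContDiffAt ℝ 2 ρ q := fun q hq => hρ.contDiffAt (hD.mem_nhds hq)
  have huc : ∀ q ∈ D, ContDiffAt ℝ 2 u q := fun q hq => hu.contDiffAt (hD.mem_nhds hq)
  have hvc : ∀ q ∈ D, ContDiffAt ℝ 2 v q := fun q hq => hv.contDiffAt (hD.mem_nhds hq)
  have hρd : ∀ q ∈ D, DifferentiableAt ℝ ρ q := fun q hq =>
    (hρc q hq).differentiableAt two_ne_zero
  have hud : ∀ q ∈ D, DifferentiableAt ℝ u q := fun q hq =>
    (huc q hq).differentiableAt two_ne_zero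
  have hvd : ∀ q ∈ D, DifferentiableAt ℝ v q := fun q hq =>
    (hvc q hq).differentiableAt two_ne_zero
  -- derivative of the pressure nonlinearity
  have hPder : ∀ q ∈ D, HasDerivAt (fun y : ℝ => y ^ γ / γ) (ρ q ^ (γ - 1)) (ρ q) := by
    intro q hq
    have h := (Real.hasDerivAt_rpow_const (x := ρ q) (p := γ)
      (Or.inl (ne_of_gt (hρpos q hq)))).div_const γ
    have : γ * ρ q ^ (γ - 1) / γ = ρ q ^ (γ - 1) := by
      field_simp
    rwa [this] at h
  have hpow : ∀ q ∈ D, ρ q ^ (γ - 1) = ρ q * ρ q ^ (γ - 2) := by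
    intro q hq
    have h1 : γ - 1 = 1 + (γ - 2) := by ring
    rw [h1, Real.rpow_add (hρpos q hq), Real.rpow_one]
  -- continuity equation, expanded
  have hC : ∀ q ∈ D, q.2 * pdX ρ q * u q + q.2 * ρ q * pdX u q
      + ((ρ q + q.2 * pdR ρ q) * v q + q.2 * ρ q * pdR v q) = 0 := by
    intro q hq
    have h := (heuler q hq).1
    rw [(pd_flux (hρd q hq) (hud q hq)).1, (pd_flux (hρd q hq) (hvd q hq)).2] at h
    linarith
  -- x-momentum, nonconservative form
  have hE1 : ∀ q ∈ D, u q * pdX u q + v q * pdR u q + ρ q ^ (γ - 2) * pdX ρ q = 0 := by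
    intro q hq
    have h := (heuler q hq).2.1
    rw [show (fun q => q.2 * ρ q * u q * v q) = (fun q => q.2 * ρ q * (u q * v q)) from
      funext fun x => by ring] at h
    simp only [Pres] at h
    rw [(pd_flux (hρd q hq) ((hud q hq).fun_pow 2)).1,
      (pd_flux (hρd q hq) ((hud q hq).fun_mul (hvd q hq))).2,
      pdX_sq (hud q hq), pdR_mul (hud q hq) (hvd q hq),
      pdX_comp (hPder q hq) (hρd q hq)] at h
    have hrρ : q.2 * ρ q ≠ 0 := mul_ne_zero (ne_of_gt (hDpos q hq)) (ne_of_gt (hρpos q hq))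
    have key : q.2 * ρ q * (u q * pdX u q + v q * pdR u q + ρ q ^ (γ - 2) * pdX ρ q) = 0 := by
      linear_combination h - u q * hC q hq - q.2 * pdX ρ q * hpow q hq
    exact (mul_eq_zero.mp key).resolve_left hrρ
  -- r-momentum, nonconservative form
  have hE2 : ∀ q ∈ D, u q * pdX v q + v q * pdR v q + ρ q ^ (γ - 2) * pdR ρ q = 0 := by
    intro q hq
    have h := (heuler q hq).2.2
    rw [show (fun q => q.2 * ρ q * u q * v q) = (fun q => q.2 * ρ q * (u q * v q)) from
      funext fun x => by ring] at h
    simp only [Pres] at h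
    rw [(pd_flux (hρd q hq) ((hud q hq).fun_mul (hvd q hq))).1,
      (pd_flux (hρd q hq) ((hvd q hq).fun_pow 2)).2,
      pdR_sq (hvd q hq), pdX_mul (hud q hq) (hvd q hq),
      pdR_comp (hPder q hq) (hρd q hq)] at h
    have hrρ : q.2 * ρ q ≠ 0 := mul_ne_zero (ne_of_gt (hDpos q hq)) (ne_of_gt (hρpos q hq))
    have key : q.2 * ρ q * (u q * pdX v q + v q * pdR v q + ρ q ^ (γ - 2) * pdR ρ q) = 0 := by
      linear_combination h - v q * hC q hq - q.2 * pdR ρ q * hpow q hq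
    exact (mul_eq_zero.mp key).resolve_left hrρ
  intro p hp
  -- differentiability of first-order derivatives at p
  have hXu := diff_pdX (huc p hp)
  have hRu := diff_pdR (huc p hp)
  have hXv := diff_pdX (hvc p hp)
  have hRv := diff_pdR (hvc p hp)
  have hXρ := diff_pdX (hρc p hp)
  have hRρ := diff_pdR (hρc p hp)
  have hρne : ρ p ≠ 0 := ne_of_gt (hρpos p hp)
  have hrne : p.2 ≠ 0 := ne_of_gt (hDpos p hp)
  have hPder2 : HasDerivAt (fun y : ℝ => y ^ (γ - 2)) ((γ - 2) * ρ p ^ (γ - 2 - 1)) (ρ p) :=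
    Real.hasDerivAt_rpow_const (Or.inl hρne)
  have hpow2d : DifferentiableAt ℝ (fun x => ρ x ^ (γ - 2)) p :=
    (hPder2.comp_hasFDerivAt p (hρd p hp).hasFDerivAt).differentiableAt
  -- curl of the momentum equations
  have hFx : pdR (fun x => u x * pdX u x + v x * pdR u x + ρ x ^ (γ - 2) * pdX ρ x) p = 0 := by
    have hz : (fun x => u x * pdX u x + v x * pdR u x + ρ x ^ (γ - 2) * pdX ρ x)
        =ᶠ[𝓝 p] (fun _ => 0) := by
      filter_upwards [hD.mem_nhds hp] with q hq using hE1 q hq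
    change (fderiv ℝ (fun x => u x * pdX u x + v x * pdR u x + ρ x ^ (γ - 2) * pdX ρ x) p) (0, 1)
      = 0
    rw [hz.fderiv_eq]
    simp
  have hFr : pdX (fun x => u x * pdX v x + v x * pdR v x + ρ x ^ (γ - 2) * pdR ρ x) p = 0 := by
    have hz : (fun x => u x * pdX v x + v x * pdR v x + ρ x ^ (γ - 2) * pdR ρ x)
        =ᶠ[𝓝 p] (fun _ => 0) := by
      filter_upwards [hD.mem_nhds hp] with q hq using hE2 q hq
    change (fderiv ℝ (fun x => u x * pdX v x + v x * pdR v x + ρ x ^ (γ - 2) * pdR ρ x) p) (1, 0)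
      = 0
    rw [hz.fderiv_eq]
    simp
  have hFx' : pdR u p * pdX u p + u p * pdR (pdX u) p
      + (pdR v p * pdR u p + v p * pdR (pdR u) p)
      + (((γ - 2) * ρ p ^ (γ - 2 - 1) * pdR ρ p) * pdX ρ p
          + ρ p ^ (γ - 2) * pdR (pdX ρ) p) = 0 := by
    rw [← hFx,
      pdR_add (((hud p hp).fun_mul hXu).fun_add ((hvd p hp).fun_mul hRu)) (hpow2d.fun_mul hXρ),
      pdR_add ((hud p hp).fun_mul hXu) ((hvd p hp).fun_mul hRu),
      pdR_mul (hud p hp) hXu, pdR_mul (hvd p hp) hRu, pdR_mul hpow2d hXρ,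
      pdR_comp hPder2 (hρd p hp)]
  have hFr' : pdX u p * pdX v p + u p * pdX (pdX v) p
      + (pdX v p * pdR v p + v p * pdX (pdR v) p)
      + (((γ - 2) * ρ p ^ (γ - 2 - 1) * pdX ρ p) * pdR ρ p
          + ρ p ^ (γ - 2) * pdX (pdR ρ) p) = 0 := by
    rw [← hFr,
      pdX_add (((hud p hp).fun_mul hXv).fun_add ((hvd p hp).fun_mul hRv)) (hpow2d.fun_mul hRρ),
      pdX_add ((hud p hp).fun_mul hXv) ((hvd p hp).fun_mul hRv),
      pdX_mul (hud p hp) hXv, pdX_mul (hvd p hp) hRv, pdX_mul hpow2d hRρ,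
      pdX_comp hPder2 (hρd p hp)]
  rw [pd_symm (huc p hp)] at hFx'
  rw [← pd_symm (hvc p hp), ← pd_symm (hρc p hp)] at hFr'
  -- the transported-curl identity
  have hkey : u p * (pdX (pdX v) p - pdX (pdR u) p)
      + v p * (pdR (pdX v) p - pdR (pdR u) p)
      + (pdX v p - pdR u p) * (pdX u p + pdR v p) = 0 := by
    linear_combination hFr' - hFx'
  -- expand the goal
  have hnum : DifferentiableAt ℝ (fun q => pdX v q - pdR u q) p := hXv.sub hRu
  have hden : DifferentiableAt ℝ (fun q : ℝ × ℝ => ρ q * q.2) p :=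
    (hρd p hp).mul differentiableAt_snd
  have hdenne : ρ p * p.2 ≠ 0 := mul_ne_zero hρne hrne
  have hinv : DifferentiableAt ℝ (fun q : ℝ × ℝ => (ρ q * q.2)⁻¹) p := hden.inv hdenne
  have hInv : HasDerivAt (fun y : ℝ => y⁻¹) (-((ρ p * p.2) ^ 2)⁻¹) (ρ p * p.2) :=
    hasDerivAt_inv hdenne
  rw [show (fun q => (pdX v q - pdR u q) / (ρ q * q.2))
      = (fun q => (pdX v q - pdR u q) * (ρ q * q.2)⁻¹) from
    funext fun q => div_eq_mul_inv _ _]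
  rw [pdX_mul hnum hinv, pdR_mul hnum hinv,
    pdX_sub hXv hRu, pdR_sub hXv hRu,
    pdX_comp hInv hden, pdR_comp hInv hden,
    pdX_mul (hρd p hp) differentiableAt_snd, pdR_mul (hρd p hp) differentiableAt_snd,
    pdX_snd, pdR_snd]
  have hCp := hC p hp
  field_simp
  linear_combination (ρ p * p.2) * hkey - (pdX v p - pdR u p) * hCp
end
end

section
/- For γ > 1 and s > 0 the following hold: (a) there exist unique ρ_*(s) > 0 and ρ^*(s) > 0 with ρ_*(s)^{γ−1}/2 + h(ρ_*(s)) = s and h(ρ^*(s)) = s, and ρ_*(s) < ρ^*(s); (b) the function M(ρ) = 2ρ²(s − h(ρ)) is strictly decreasing on the interval [ρ_*(s), ρ^*(s)], with M(ρ_*(s)) = ρ_*(s)^{γ+1} =: Σ(s) and M(ρ^*(s)) = 0; (c) consequently, for every M ∈ [0, Σ(s)] there is a unique ρ ∈ [ρ_*(s), ρ^*(s)] satisfying M/(2ρ²) + h(ρ) = s (the subsonic branch of the Bernoulli relation). -/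
open scoped Topology
open Filter Set MeasureTheory

noncomputable section

private lemma aux_rpow_inj {β x y : ℝ} (hβ : 0 < β) (hx : 0 < x) (hy : 0 < y)
    (h : x ^ β = y ^ β) : x = y := by
  rcases lt_trichotomy x y with h1 | h1 | h1
  · exact absurd h (ne_of_lt (Real.rpow_lt_rpow hx.le h1 hβ))
  · exact h1
  · exact absurd h.symm (ne_of_lt (Real.rpow_lt_rpow hy.le h1 hβ))

private lemma aux_exists_rpow {β a : ℝ} (hβ : 0 < β) (ha : 0 < a) :
    ∃ x : ℝ, 0 < x ∧ x ^ β = a :=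
  ⟨a ^ β⁻¹, Real.rpow_pos_of_pos ha _, Real.rpow_inv_rpow ha.le hβ.ne'⟩

private lemma aux_hasDerivAt (β s : ℝ) (hβ : 0 < β) {ρ : ℝ} (hρ : 0 < ρ) :
    HasDerivAt (fun ρ : ℝ => 2 * ρ ^ 2 * (s - ρ ^ β / β))
      (4 * ρ * (s - ρ ^ β / β) - 2 * ρ * ρ ^ β) ρ := by
  have h1 : HasDerivAt (fun ρ : ℝ => ρ ^ β) (β * ρ ^ (β - 1)) ρ :=
    Real.hasDerivAt_rpow_const (Or.inl hρ.ne')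
  have h2 : HasDerivAt (fun ρ : ℝ => s - ρ ^ β / β) (0 - β * ρ ^ (β - 1) / β) ρ :=
    (hasDerivAt_const ρ s).sub (h1.div_const β)
  have h3 : HasDerivAt (fun ρ : ℝ => 2 * ρ ^ 2) (2 * ((2:ℕ) * ρ ^ (2 - 1))) ρ :=
    (hasDerivAt_pow 2 ρ).const_mul 2
  have key : ρ * ρ ^ (β - 1) = ρ ^ β := by
    rw [show β = 1 + (β - 1) by ring, Real.rpow_add hρ, Real.rpow_one]; ring_nf
  refine (h3.mul h2).congr_deriv ?_
  rw [mul_div_cancel_left₀ _ hβ.ne']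
  push_cast
  linear_combination (-2*ρ) * key

private lemma aux_char1 {β s ρ : ℝ} (hβ : 0 < β) (hρ : 0 < ρ) :
    ρ ^ β / 2 + ρ ^ β / β = s ↔ ρ ^ β = 2 * β * s / (β + 2) := by
  rw [eq_div_iff (by positivity : (β:ℝ) + 2 ≠ 0)]
  constructor
  · intro h
    field_simp at h
    linear_combination h
  · intro h
    field_simp
    linear_combination h

private lemma aux_char2 {β s ρ : ℝ} (hβ : 0 < β) (hρ : 0 < ρ) :
    ρ ^ β / β = s ↔ ρ ^ β = β * s := by
  rw [div_eq_iff hβ.ne', mul_comm]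

private lemma aux_equiv {β s M ρ : ℝ} (hβ : 0 < β) (hρ : 0 < ρ) :
    M / (2 * ρ ^ 2) + ρ ^ β / β = s ↔ 2 * ρ ^ 2 * (s - ρ ^ β / β) = M := by
  have hne : (2 * ρ ^ 2) ≠ 0 := by positivity
  constructor
  · intro h
    have h2 : M / (2 * ρ ^ 2) = s - ρ ^ β / β := by linarith
    rw [div_eq_iff hne] at h2
    rw [h2]; ring
  · intro h
    have h2 : M / (2 * ρ ^ 2) = s - ρ ^ β / β := by
      rw [div_eq_iff hne, ← h]; ring
    linarith

/-- **The subsonic branch of the Bernoulli relation.** For `γ > 1` and `s > 0`: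
(a) there are unique `ρ_*(s), ρ^*(s) > 0` with `ρ_*^{γ-1}/2 + h(ρ_*) = s` and `h(ρ^*) = s`,
and `ρ_* < ρ^*`; (b) `M(ρ) = 2ρ²(s − h(ρ))` is strictly decreasing on `[ρ_*, ρ^*]`, with
`M(ρ_*) = ρ_*^{γ+1}` and `M(ρ^*) = 0`; (c) for every `M ∈ [0, ρ_*^{γ+1}]` there is a unique
`ρ ∈ [ρ_*, ρ^*]` with `M/(2ρ²) + h(ρ) = s`. -/
theorem subsonic_branch (γ s : ℝ) (hγ : 1 < γ) (hs : 0 < s) :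
    (∃! ρst : ℝ, 0 < ρst ∧ ρst ^ (γ - 1) / 2 + enth γ ρst = s) ∧
    (∃! ρSt : ℝ, 0 < ρSt ∧ enth γ ρSt = s) ∧
    (∀ ρst ρSt : ℝ,
      (0 < ρst ∧ ρst ^ (γ - 1) / 2 + enth γ ρst = s) →
      (0 < ρSt ∧ enth γ ρSt = s) →
      ρst < ρSt ∧
      StrictAntiOn (fun ρ : ℝ => 2 * ρ ^ 2 * (s - enth γ ρ)) (Set.Icc ρst ρSt) ∧
      2 * ρst ^ 2 * (s - enth γ ρst) = ρst ^ (γ + 1) ∧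
      2 * ρSt ^ 2 * (s - enth γ ρSt) = 0 ∧
      (∀ M : ℝ, 0 ≤ M → M ≤ ρst ^ (γ + 1) →
        ∃! ρ : ℝ, ρ ∈ Set.Icc ρst ρSt ∧ M / (2 * ρ ^ 2) + enth γ ρ = s)) := by
  have hβ : 0 < γ - 1 := by linarith
  simp only [enth]
  obtain ⟨a, ha, haeq⟩ := aux_exists_rpow hβ
    (show (0:ℝ) < 2 * (γ - 1) * s / ((γ - 1) + 2) by positivity)
  obtain ⟨b, hb, hbeq⟩ := aux_exists_rpow hβ (show (0:ℝ) < (γ - 1) * s by positivity)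
  refine ⟨⟨a, ⟨ha, (aux_char1 hβ ha).mpr haeq⟩, ?_⟩,
    ⟨b, ⟨hb, (aux_char2 hβ hb).mpr hbeq⟩, ?_⟩, ?_⟩
  · rintro y ⟨hy, hyeq⟩
    exact aux_rpow_inj hβ hy ha (by rw [(aux_char1 hβ hy).mp hyeq, haeq])
  · rintro y ⟨hy, hyeq⟩
    exact aux_rpow_inj hβ hy hb (by rw [(aux_char2 hβ hy).mp hyeq, hbeq])
  · rintro ρst ρSt ⟨h1, h2⟩ ⟨h3, h4⟩
    have hst : ρst ^ (γ - 1) = 2 * (γ - 1) * s / ((γ - 1) + 2) := (aux_char1 hβ h1).mp h2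
    have hSt : ρSt ^ (γ - 1) = (γ - 1) * s := (aux_char2 hβ h3).mp h4
    have hAB : ρst ^ (γ - 1) < ρSt ^ (γ - 1) := by
      rw [hst, hSt, div_lt_iff₀ (by positivity)]
      nlinarith [mul_pos (mul_pos hβ hs) hβ]
    have hlt : ρst < ρSt := by
      by_contra h
      push_neg at h
      have := Real.rpow_le_rpow h3.le h hβ.le
      linarith
    have hpow : ρst ^ (γ + 1) = ρst ^ 2 * ρst ^ (γ - 1) := by
      rw [show γ + 1 = ((2:ℕ):ℝ) + (γ - 1) by push_cast; ring, Real.rpow_add h1,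
        Real.rpow_natCast]
    have SA : StrictAntiOn (fun ρ : ℝ => 2 * ρ ^ 2 * (s - ρ ^ (γ - 1) / (γ - 1)))
        (Set.Icc ρst ρSt) := by
      apply strictAntiOn_of_deriv_neg (convex_Icc _ _)
      · exact fun x hx =>
          ((aux_hasDerivAt (γ - 1) s hβ (lt_of_lt_of_le h1 hx.1)).continuousAt).continuousWithinAt
      · intro x hx
        rw [interior_Icc] at hx
        have hx0 : 0 < x := h1.trans hx.1
        rw [(aux_hasDerivAt (γ - 1) s hβ hx0).deriv]
        have hP : ρst ^ (γ - 1) < x ^ (γ - 1) := Real.rpow_lt_rpow h1.le hx.1 hβ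
        rw [hst, div_lt_iff₀ (by positivity)] at hP
        have hPpos : 0 < x ^ (γ - 1) := Real.rpow_pos_of_pos hx0 _
        have h5 : s - x ^ (γ - 1) / (γ - 1) < x ^ (γ - 1) / 2 := by
          rw [sub_lt_iff_lt_add, div_add_div _ _ two_ne_zero hβ.ne',
            lt_div_iff₀ (by positivity)]
          nlinarith
        nlinarith [mul_lt_mul_of_pos_left h5 (by linarith : (0:ℝ) < 4 * x)]
    have hFa : 2 * ρst ^ 2 * (s - ρst ^ (γ - 1) / (γ - 1)) = ρst ^ (γ + 1) := by
      have h5 : s - ρst ^ (γ - 1) / (γ - 1) = ρst ^ (γ - 1) / 2 := by linarith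
      rw [hpow]
      linear_combination (2 * ρst ^ 2) * h5
    have hFb : 2 * ρSt ^ 2 * (s - ρSt ^ (γ - 1) / (γ - 1)) = 0 := by
      rw [← h4]; ring
    refine ⟨hlt, SA, hFa, hFb, ?_⟩
    intro M hM0 hMS
    have hcont : ContinuousOn (fun ρ : ℝ => 2 * ρ ^ 2 * (s - ρ ^ (γ - 1) / (γ - 1)))
        (Set.Icc ρst ρSt) := fun x hx =>
      ((aux_hasDerivAt (γ - 1) s hβ (lt_of_lt_of_le h1 hx.1)).continuousAt).continuousWithinAt
    have hmem : M ∈ Set.Icc (2 * ρSt ^ 2 * (s - ρSt ^ (γ - 1) / (γ - 1)))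
        (2 * ρst ^ 2 * (s - ρst ^ (γ - 1) / (γ - 1))) := by
      rw [hFa, hFb]; exact ⟨hM0, hMS⟩
    obtain ⟨ρ, hρmem, hFρ⟩ := intermediate_value_Icc' hlt.le hcont hmem
    refine ⟨ρ, ⟨hρmem, (aux_equiv hβ (h1.trans_le hρmem.1)).mpr hFρ⟩, ?_⟩
    rintro y ⟨hymem, hyeq⟩
    exact SA.injOn hymem hρmem
      (((aux_equiv hβ (h1.trans_le hymem.1)).mp hyeq).trans hFρ.symm)
end
end
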